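/- Let Θ ⊆ ℝ^n be a nonempty closed convex set, P : Θ → 𝒫(ℝ^m) a map assigning to each decision a Borel probability measure, ℓ : ℝ^m × ℝ^n → ℝ a loss, r : ℝ^n → ℝ a differentiable regularizer, and define J_η(θ) := ∫ ℓ(z,θ) dP(η)(z) + r(θ). Assume: (i) for every z, θ ↦ ℓ(z,θ) is differentiable and γ-strongly convex on Θ; (ii) r is ρ-strongly convex on Θ and γ + ρ > 0; (iii) ℓ is β-jointly smooth, i.e., ‖∇_θℓ(z,θ) − ∇_θℓ(z,θ')‖ ≤ β‖θ − θ'‖ and ‖∇_θℓ(z,θ) − ∇_θℓ(z',θ)‖ ≤ β‖z − z'‖ for all θ, θ' ∈ Θ and z, z' ∈ ℝ^m; (iv) for each η ∈ Θ and θ ∈ Θ, z ↦ ℓ(z,θ) and z ↦ ∇_θℓ(z,θ) are P(η)-integrable and θ ↦ ∫ ℓ(z,θ) dP(η)(z) is differentiable with gradient ∫ ∇_θℓ(z,θ) dP(η)(z); (v) P is ε-sensitive in Kantorovich dual form: for every L ≥ 0, every L-Lipschitz function g : ℝ^m → ℝ^n, and all η, η' ∈ Θ, ‖∫ g dP(η)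 − ∫ g dP(η')‖ ≤ εL‖η − η'‖. If for each η ∈ Θ, G(η) ∈ Θ minimizes θ ↦ J_η(θ) over Θ, then for all η, η' ∈ Θ: ‖G(η) − G(η')‖ ≤ (εβ/(γ+ρ))‖η − η'‖. -/

import Mathlib

open MeasureTheory InnerProductSpace Filter Set Topology


section AuxRRRM

variable {E : Type*} [NormedAddCommGroup E] [InnerProductSpace ℝ E] [CompleteSpace E]

private lemma aux_deriv_line {f : E → ℝ} {g x : E} (hf : HasGradientAt f g x) (v : E) :
    HasDerivAt (fun t : ℝ => f (x + t • v)) (inner ℝ g v : ℝ) 0 := by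
  have hline : HasDerivAt (fun t : ℝ => x + t • v) v 0 := by
    simpa using ((hasDerivAt_id (0 : ℝ)).smul_const v).const_add x
  have hf' := hf.hasFDerivAt
  rw [show x = x + (0 : ℝ) • v by simp] at hf'
  simpa [toDual_apply_apply, Function.comp_def] using hf'.comp_hasDerivAt 0 hline

private lemma aux_slope_tendsto {f : E → ℝ} {g x : E} (hf : HasGradientAt f g x) (v : E) :
    Tendsto (fun t : ℝ => (f (x + t • v) - f x) / t) (𝓝[>] (0 : ℝ))
      (𝓝 (inner ℝ g v : ℝ)) := by
  have hd := aux_deriv_line hf v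
  have h := hasDerivAt_iff_tendsto_slope.mp hd
  have h' : Tendsto (slope (fun t : ℝ => f (x + t • v)) 0) (𝓝[>] (0 : ℝ))
      (𝓝 (inner ℝ g v : ℝ)) :=
    h.mono_left (nhdsWithin_mono _ (fun t ht => ne_of_gt ht))
  refine h'.congr (fun t => ?_)
  simp [slope_def_field]

/-- First-order optimality condition for a minimizer over a convex set. -/
private lemma aux_opt {f : E → ℝ} {g x : E} {Θ : Set E} (hΘ : Convex ℝ Θ) (hx : x ∈ Θ)
    (hf : HasGradientAt f g x) (hmin : ∀ y ∈ Θ, f x ≤ f y) :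
    ∀ y ∈ Θ, 0 ≤ (inner ℝ g (y - x) : ℝ) := by
  intro y hy
  refine ge_of_tendsto (aux_slope_tendsto hf (y - x)) ?_
  filter_upwards [Ioc_mem_nhdsGT_of_mem (⟨le_refl (0 : ℝ), one_pos⟩ : (0:ℝ) ∈ Ico (0:ℝ) 1)]
    with t ht
  have hmem : x + t • (y - x) ∈ Θ := hΘ.add_smul_sub_mem hx hy ⟨ht.1.le, ht.2⟩
  exact div_nonneg (sub_nonneg.2 (hmin _ hmem)) ht.1.le

/-- Gradient lower bound for convex functions. -/
private lemma aux_lb {f : E → ℝ} {g x y : E} {Θ : Set E} (hc : ConvexOn ℝ Θ f)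
    (hx : x ∈ Θ) (hy : y ∈ Θ) (hf : HasGradientAt f g x) :
    f x + (inner ℝ g (y - x) : ℝ) ≤ f y := by
  have key : (inner ℝ g (y - x) : ℝ) ≤ f y - f x := by
    refine le_of_tendsto (aux_slope_tendsto hf (y - x)) ?_
    filter_upwards [Ioo_mem_nhdsGT (one_pos : (0:ℝ) < 1)] with t ht
    have hcomb : x + t • (y - x) = (1 - t) • x + t • y := by
      rw [smul_sub, sub_smul, one_smul]; abel
    have := hc.2 hx hy (show (0:ℝ) ≤ 1 - t by linarith [ht.2]) ht.1.le (by ring)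
    rw [← hcomb] at this
    rw [div_le_iff₀ ht.1]
    calc f (x + t • (y - x)) - f x ≤ (1 - t) * f x + t * f y - f x := by
          simpa [smul_eq_mul] using sub_le_sub_right this (f x)
      _ = (f y - f x) * t := by ring
  linarith

private lemma aux_gradient_add {f₁ f₂ : E → ℝ} {g₁ g₂ x : E}
    (h₁ : HasGradientAt f₁ g₁ x) (h₂ : HasGradientAt f₂ g₂ x) :
    HasGradientAt (fun y => f₁ y + f₂ y) (g₁ + g₂) x := by
  rw [hasGradientAt_iff_hasFDerivAt, map_add]
  exact h₁.hasFDerivAt.add h₂.hasFDerivAt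

private lemma aux_gradient_sub {f₁ f₂ : E → ℝ} {g₁ g₂ x : E}
    (h₁ : HasGradientAt f₁ g₁ x) (h₂ : HasGradientAt f₂ g₂ x) :
    HasGradientAt (fun y => f₁ y - f₂ y) (g₁ - g₂) x := by
  rw [hasGradientAt_iff_hasFDerivAt, map_sub]
  exact h₁.hasFDerivAt.sub h₂.hasFDerivAt

private lemma aux_gradient_half_normSq (c : ℝ) (x : E) :
    HasGradientAt (fun y : E => c / 2 * ‖y‖ ^ 2) (c • x) x := by
  rw [hasGradientAt_iff_hasFDerivAt]
  have h1 : HasFDerivAt (fun y : E => ‖y‖ ^ 2)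
      (2 • (innerSL ℝ x).comp (ContinuousLinearMap.id ℝ E)) x := by
    simpa using (hasFDerivAt_id x).norm_sq
  have h2 := h1.const_mul (c / 2)
  refine h2.congr_fderiv ?_
  ext v
  simp [toDual_apply_apply, real_inner_smul_left, two_smul]
  ring

end AuxRRRM


/-- Theorem 1(a) of the paper: the repeated robust risk minimization update
`G` (the minimizer over `Θ` of the decoupled risk
`J_η(θ) = ∫ ℓ(z,θ) dP(η)(z) + r(θ)`) is `εβ/(γ+ρ)`-Lipschitz on `Θ`.
Here `γ`-strong convexity of `f` on `Θ` means convexity of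
`θ ↦ f θ - γ/2 * ‖θ‖²` on `Θ`, and the distribution map `P` is `ε`-sensitive in
the Kantorovich dual form. -/
theorem RRRM_update_contraction {n m : ℕ} (γ ρ β ε : ℝ)
    (hβ : 0 ≤ β) (hε : 0 ≤ ε) (hγρ : 0 < γ + ρ)
    (Θ : Set (EuclideanSpace ℝ (Fin n))) (hΘne : Θ.Nonempty)
    (hΘcl : IsClosed Θ) (hΘconv : Convex ℝ Θ)
    (P : EuclideanSpace ℝ (Fin n) → Measure (EuclideanSpace ℝ (Fin m)))
    (hP : ∀ η, IsProbabilityMeasure (P η))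
    (ℓ : EuclideanSpace ℝ (Fin m) → EuclideanSpace ℝ (Fin n) → ℝ)
    (r : EuclideanSpace ℝ (Fin n) → ℝ) (hr : Differentiable ℝ r)
    -- (i) differentiability and γ-strong convexity of the loss in θ
    (hℓdiff : ∀ z, Differentiable ℝ (fun θ => ℓ z θ))
    (hℓsc : ∀ z, ConvexOn ℝ Θ (fun θ => ℓ z θ - γ / 2 * ‖θ‖ ^ 2))
    -- (ii) ρ-strong convexity of the regularizer
    (hrsc : ConvexOn ℝ Θ (fun θ => r θ - ρ / 2 * ‖θ‖ ^ 2))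
    -- (iii) β-joint smoothness
    (hsmooth₁ : ∀ z, ∀ θ ∈ Θ, ∀ θ' ∈ Θ,
      ‖gradient (fun t => ℓ z t) θ - gradient (fun t => ℓ z t) θ'‖ ≤ β * ‖θ - θ'‖)
    (hsmooth₂ : ∀ θ ∈ Θ, ∀ z z' : EuclideanSpace ℝ (Fin m),
      ‖gradient (fun t => ℓ z t) θ - gradient (fun t => ℓ z' t) θ‖ ≤ β * ‖z - z'‖)
    -- (iv) integrability and differentiation under the integral sign
    (hint : ∀ η ∈ Θ, ∀ θ ∈ Θ, Integrable (fun z => ℓ z θ) (P η) ∧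
      Integrable (fun z => gradient (fun t => ℓ z t) θ) (P η))
    (hgrad : ∀ η ∈ Θ, ∀ θ ∈ Θ,
      HasGradientAt (fun t => ∫ z, ℓ z t ∂(P η))
        (∫ z, gradient (fun t => ℓ z t) θ ∂(P η)) θ)
    -- (v) ε-sensitivity in Kantorovich dual form
    (hsens : ∀ L : ℝ, 0 ≤ L →
      ∀ g : EuclideanSpace ℝ (Fin m) → EuclideanSpace ℝ (Fin n),
        (∀ z z', ‖g z - g z'‖ ≤ L * ‖z - z'‖) →
        ∀ η ∈ Θ, ∀ η' ∈ Θ,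
          ‖(∫ z, g z ∂(P η)) - ∫ z, g z ∂(P η')‖ ≤ ε * L * ‖η - η'‖)
    -- G(η) minimizes J_η over Θ
    (G : EuclideanSpace ℝ (Fin n) → EuclideanSpace ℝ (Fin n))
    (hG : ∀ η ∈ Θ, G η ∈ Θ ∧ ∀ θ ∈ Θ,
      (∫ z, ℓ z (G η) ∂(P η)) + r (G η) ≤ (∫ z, ℓ z θ ∂(P η)) + r θ) :
    ∀ η ∈ Θ, ∀ η' ∈ Θ, ‖G η - G η'‖ ≤ ε * β / (γ + ρ) * ‖η - η'‖ := by

  intro η hη η' hη'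
  obtain ⟨hxΘ, hxmin⟩ := hG η hη
  obtain ⟨hyΘ, hymin⟩ := hG η' hη'
  set x := G η
  set y := G η'
  set c := γ + ρ with hc
  -- gradient of the decoupled risk J_ζ at θ ∈ Θ
  have hJgrad : ∀ ζ ∈ Θ, ∀ θ ∈ Θ,
      HasGradientAt (fun t => (∫ z, ℓ z t ∂(P ζ)) + r t)
        ((∫ z, gradient (fun t => ℓ z t) θ ∂(P ζ)) + gradient r θ) θ :=
    fun ζ hζ θ hθ => aux_gradient_add (hgrad ζ hζ θ hθ) ((hr θ).hasGradientAt)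
  -- convexity of J_ζ - c/2 ‖·‖²
  have hJconv : ∀ ζ ∈ Θ, ConvexOn ℝ Θ
      (fun θ => ((∫ z, ℓ z θ ∂(P ζ)) + r θ) - c / 2 * ‖θ‖ ^ 2) := by
    intro ζ hζ
    have hIc : ConvexOn ℝ Θ (fun θ => (∫ z, ℓ z θ ∂(P ζ)) - γ / 2 * ‖θ‖ ^ 2) := by
      refine ⟨hΘconv, ?_⟩
      intro a ha b hb wa wb hwa hwb hw
      have hab : wa • a + wb • b ∈ Θ := hΘconv ha hb hwa hwb hw
      set K : ℝ := γ / 2 * ‖wa • a + wb • b‖ ^ 2 - wa * (γ / 2 * ‖a‖ ^ 2)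
        - wb * (γ / 2 * ‖b‖ ^ 2) with hK
      have hpt : ∀ z, ℓ z (wa • a + wb • b) ≤ wa * ℓ z a + wb * ℓ z b + K := by
        intro z
        have := (hℓsc z).2 ha hb hwa hwb hw
        simp only [smul_eq_mul] at this
        rw [hK]; linarith
      have hIa := (hint ζ hζ a ha).1
      have hIb := (hint ζ hζ b hb).1
      haveI := hP ζ
      have hIab : Integrable (fun z => wa * ℓ z a + wb * ℓ z b) (P ζ) :=
        (hIa.const_mul wa).add (hIb.const_mul wb)
      have hI2 : Integrable (fun z => wa * ℓ z a + wb * ℓ z b + K) (P ζ) :=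
        hIab.add (integrable_const _)
      have hmono := integral_mono (hint ζ hζ _ hab).1 hI2 hpt
      rw [integral_add hIab (integrable_const _),
        integral_add (hIa.const_mul wa) (hIb.const_mul wb),
        integral_const_mul, integral_const_mul, integral_const] at hmono
      simp only [measure_univ, ENNReal.toReal_one, probReal_univ, one_smul] at hmono
      simp only [smul_eq_mul]
      rw [hK] at hmono
      linarith
    have heq : (fun θ => ((∫ z, ℓ z θ ∂(P ζ)) + r θ) - c / 2 * ‖θ‖ ^ 2)
        = fun θ => ((∫ z, ℓ z θ ∂(P ζ)) - γ / 2 * ‖θ‖ ^ 2)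
          + (r θ - ρ / 2 * ‖θ‖ ^ 2) := by
      funext θ; rw [hc]; ring
    rw [heq]
    exact hIc.add hrsc
  -- gradients of the shifted functions
  have hHgrad : ∀ ζ ∈ Θ, ∀ θ ∈ Θ,
      HasGradientAt (fun t => ((∫ z, ℓ z t ∂(P ζ)) + r t) - c / 2 * ‖t‖ ^ 2)
        ((((∫ z, gradient (fun t => ℓ z t) θ ∂(P ζ)) + gradient r θ)) - c • θ) θ :=
    fun ζ hζ θ hθ => aux_gradient_sub (hJgrad ζ hζ θ hθ) (aux_gradient_half_normSq c θ)
  set g1 : EuclideanSpace ℝ (Fin n) :=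
    (∫ z, gradient (fun t => ℓ z t) x ∂(P η)) + gradient r x with hg1
  set g2 : EuclideanSpace ℝ (Fin n) :=
    (∫ z, gradient (fun t => ℓ z t) y ∂(P η)) + gradient r y with hg2
  set g3 : EuclideanSpace ℝ (Fin n) :=
    (∫ z, gradient (fun t => ℓ z t) y ∂(P η')) + gradient r y with hg3
  -- strong monotonicity of the gradient of J_η
  have hlb1 := aux_lb (hJconv η hη) hxΘ hyΘ (hHgrad η hη x hxΘ)
  have hlb2 := aux_lb (hJconv η hη) hyΘ hxΘ (hHgrad η hη y hyΘ)
  have hsum : (inner ℝ (g1 - c • x) (y - x) : ℝ) + (inner ℝ (g2 - c • y) (x - y) : ℝ) ≤ 0 := by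
    linarith
  have hmono : c * ‖x - y‖ ^ 2 ≤ (inner ℝ (g1 - g2) (x - y) : ℝ) := by
    have e1 : (inner ℝ (g1 - c • x) (y - x) : ℝ)
        = -(inner ℝ g1 (x - y) : ℝ) + c * (inner ℝ x (x - y) : ℝ) := by
      rw [inner_sub_left, real_inner_smul_left, show y - x = -(x - y) by abel,
        inner_neg_right, inner_neg_right]
      ring
    have e2 : (inner ℝ (g2 - c • y) (x - y) : ℝ)
        = (inner ℝ g2 (x - y) : ℝ) - c * (inner ℝ y (x - y) : ℝ) := by
      rw [inner_sub_left, real_inner_smul_left]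
    have e3 : (inner ℝ x (x - y) : ℝ) - (inner ℝ y (x - y) : ℝ) = ‖x - y‖ ^ 2 := by
      rw [← inner_sub_left, real_inner_self_eq_norm_sq]
    have e4 : (inner ℝ (g1 - g2) (x - y) : ℝ)
        = (inner ℝ g1 (x - y) : ℝ) - (inner ℝ g2 (x - y) : ℝ) := inner_sub_left _ _ _
    rw [e1, e2] at hsum
    rw [e4]
    nlinarith [e3]
  -- first-order optimality at both minimizers
  have hopt1 : 0 ≤ (inner ℝ g1 (y - x) : ℝ) :=
    aux_opt hΘconv hxΘ (hJgrad η hη x hxΘ) hxmin y hyΘ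
  have hopt2 : 0 ≤ (inner ℝ g3 (x - y) : ℝ) :=
    aux_opt hΘconv hyΘ (hJgrad η' hη' y hyΘ) hymin x hxΘ
  -- sensitivity bound
  have hsensb : ‖g3 - g2‖ ≤ ε * β * ‖η - η'‖ := by
    have h1 : g3 - g2 = (∫ z, gradient (fun t => ℓ z t) y ∂(P η'))
        - ∫ z, gradient (fun t => ℓ z t) y ∂(P η) := by
      rw [hg2, hg3]; abel
    rw [h1]
    have := hsens β hβ (fun z => gradient (fun t => ℓ z t) y)
      (fun z z' => hsmooth₂ y hyΘ z z') η' hη' η hη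
    rwa [norm_sub_rev η' η] at this
  -- combine
  have hg1le : (inner ℝ g1 (x - y) : ℝ) ≤ 0 := by
    have h' : (inner ℝ g1 (x - y) : ℝ) = -(inner ℝ g1 (y - x) : ℝ) := by
      rw [show x - y = -(y - x) by abel, inner_neg_right]
    linarith
  have hchain : c * ‖x - y‖ ^ 2 ≤ (inner ℝ (g3 - g2) (x - y) : ℝ) := by
    have e4 : (inner ℝ (g1 - g2) (x - y) : ℝ)
        = (inner ℝ g1 (x - y) : ℝ) - (inner ℝ g2 (x - y) : ℝ) := inner_sub_left _ _ _
    have e5 : (inner ℝ (g3 - g2) (x - y) : ℝ)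
        = (inner ℝ g3 (x - y) : ℝ) - (inner ℝ g2 (x - y) : ℝ) := inner_sub_left _ _ _
    rw [e4] at hmono
    rw [e5]
    linarith
  have hfinal : c * ‖x - y‖ ^ 2 ≤ ε * β * ‖η - η'‖ * ‖x - y‖ :=
    hchain.trans ((real_inner_le_norm _ _).trans
      (mul_le_mul_of_nonneg_right hsensb (norm_nonneg _)))
  rcases eq_or_lt_of_le (norm_nonneg (x - y)) with h0 | h0
  · rw [← h0]
    positivity
  · rw [div_mul_eq_mul_div, le_div_iff₀ hγρ]
    have : ‖x - y‖ * c * ‖x - y‖ ≤ ε * β * ‖η - η'‖ * ‖x - y‖ := by nlinarith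
    exact le_of_mul_le_mul_right this h0
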